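/- Let s₊ > 0, let Q ∈ S₀ (the real symmetric traceless 3×3 matrices), and let n ∈ ℝ³ be a unit vector with n ≠ −e₃ which is an eigenvector of Q (i.e. Qn = λn for some λ ∈ ℝ). Then there exists a unique ρ = (ρ₁,ρ₂,ρ₃) ∈ ℝ³ such that Q = s₊(n⊗n − (1/3)I) + R_n (ρ₁F₁ + ρ₂F₂ + ρ₃F₃) R_nᵀ. -/

import Mathlib

open Matrix

/-- Standard basis vectors of `ℝ³`. -/
def e1v : Fin 3 → ℝ := ![1, 0, 0]
def e2v : Fin 3 → ℝ := ![0, 1, 0]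
def e3v : Fin 3 → ℝ := ![0, 0, 1]

/-- `F₁ = (e₁⊗e₁ - e₂⊗e₂)/√2`. -/
noncomputable def F1 : Matrix (Fin 3) (Fin 3) ℝ :=
  (Real.sqrt 2)⁻¹ • (vecMulVec e1v e1v - vecMulVec e2v e2v)

/-- `F₂ = (e₁⊗e₂ + e₂⊗e₁)/√2`. -/
noncomputable def F2 : Matrix (Fin 3) (Fin 3) ℝ :=
  (Real.sqrt 2)⁻¹ • (vecMulVec e1v e2v + vecMulVec e2v e1v)

/-- `F₃ = √(3/2)(e₃⊗e₃ - (1/3)I)`. -/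
noncomputable def F3 : Matrix (Fin 3) (Fin 3) ℝ :=
  Real.sqrt (3 / 2) • (vecMulVec e3v e3v - (3 : ℝ)⁻¹ • (1 : Matrix (Fin 3) (Fin 3) ℝ))

/-- The antisymmetric matrix `[ω]_×` of `ω ∈ ℝ³`, with `[ω]_× v = ω × v`. -/
def skew3 (ω : Fin 3 → ℝ) : Matrix (Fin 3) (Fin 3) ℝ :=
  !![0, -ω 2, ω 1; ω 2, 0, -ω 0; -ω 1, ω 0, 0]

/-- The rotation `R_n = I + [e₃×n]_× + [e₃×n]_×²/(1 + n·e₃)` mapping `e₃` to `n`. -/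
noncomputable def Rrot (n : Fin 3 → ℝ) : Matrix (Fin 3) (Fin 3) ℝ :=
  1 + skew3 (e3v ⨯₃ n) + (1 + n ⬝ᵥ e3v)⁻¹ • (skew3 (e3v ⨯₃ n) * skew3 (e3v ⨯₃ n))

lemma Rrot_eq (n : Fin 3 → ℝ) :
    Rrot n = !![1 - (n 0)^2 * (1 + n 2)⁻¹, -(n 0 * n 1) * (1 + n 2)⁻¹, n 0;
                -(n 0 * n 1) * (1 + n 2)⁻¹, 1 - (n 1)^2 * (1 + n 2)⁻¹, n 1;
                -(n 0), -(n 1), 1 - ((n 0)^2 + (n 1)^2) * (1 + n 2)⁻¹] := by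
  have hsk : skew3 (e3v ⨯₃ n) = !![0, 0, n 0; 0, 0, n 1; -(n 0), -(n 1), 0] := by
    simp [skew3, crossProduct, e3v]
  have hd : n ⬝ᵥ e3v = n 2 := by simp [dotProduct, e3v, Fin.sum_univ_three]
  rw [Rrot, hsk, hd]
  ext i j
  fin_cases i <;> fin_cases j <;>
    simp [Matrix.mul_apply, Fin.sum_univ_three, Matrix.one_apply] <;> ring

lemma Rrot_mul_transpose (n : Fin 3 → ℝ) (hn : n 0 ^ 2 + n 1 ^ 2 + n 2 ^ 2 = 1)
    (hc : (1 : ℝ) + n 2 ≠ 0) : Rrot n * (Rrot n)ᵀ = 1 := by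
  have hc2 : (1 + n 2)⁻¹ * (1 + n 2) = 1 := inv_mul_cancel₀ hc
  rw [Rrot_eq]
  ext i j
  fin_cases i <;> fin_cases j <;>
      simp only [Matrix.mul_apply, Matrix.transpose_apply, Fin.sum_univ_three] <;>
      simp [Matrix.one_apply] <;>
    first
      | ring1
      | linear_combination (n 0 ^ 2 * ((1 + n 2)⁻¹)^2) * hn + (n 0 ^ 2 * ((1 - n 2) * (1 + n 2)⁻¹ - 1)) * hc2
      | linear_combination (n 1 ^ 2 * ((1 + n 2)⁻¹)^2) * hn + (n 1 ^ 2 * ((1 - n 2) * (1 + n 2)⁻¹ - 1)) * hc2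
      | linear_combination (n 0 * n 1 * ((1 + n 2)⁻¹)^2) * hn + (n 0 * n 1 * ((1 - n 2) * (1 + n 2)⁻¹ - 1)) * hc2
      | linear_combination ((n 0 ^ 2 + n 1 ^ 2) * ((1 + n 2)⁻¹)^2) * hn + ((n 0 ^ 2 + n 1 ^ 2) * ((1 - n 2) * (1 + n 2)⁻¹ - 1)) * hc2

lemma Rrot_transpose_mul (n : Fin 3 → ℝ) (hn : n 0 ^ 2 + n 1 ^ 2 + n 2 ^ 2 = 1)
    (hc : (1 : ℝ) + n 2 ≠ 0) : (Rrot n)ᵀ * Rrot n = 1 := by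
  have hc2 : (1 + n 2)⁻¹ * (1 + n 2) = 1 := inv_mul_cancel₀ hc
  rw [Rrot_eq]
  ext i j
  fin_cases i <;> fin_cases j <;>
      simp only [Matrix.mul_apply, Matrix.transpose_apply, Fin.sum_univ_three] <;>
      simp [Matrix.one_apply] <;>
    first
      | ring1
      | linear_combination (n 0 ^ 2 * ((1 + n 2)⁻¹)^2) * hn + (n 0 ^ 2 * ((1 - n 2) * (1 + n 2)⁻¹ - 1)) * hc2
      | linear_combination (n 1 ^ 2 * ((1 + n 2)⁻¹)^2) * hn + (n 1 ^ 2 * ((1 - n 2) * (1 + n 2)⁻¹ - 1)) * hc2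
      | linear_combination (n 0 * n 1 * ((1 + n 2)⁻¹)^2) * hn + (n 0 * n 1 * ((1 - n 2) * (1 + n 2)⁻¹ - 1)) * hc2
      | linear_combination ((n 0 ^ 2 + n 1 ^ 2) * ((1 + n 2)⁻¹)^2) * hn + ((n 0 ^ 2 + n 1 ^ 2) * ((1 - n 2) * (1 + n 2)⁻¹ - 1)) * hc2

lemma Rrot_mulVec_e3 (n : Fin 3 → ℝ) (hn : n 0 ^ 2 + n 1 ^ 2 + n 2 ^ 2 = 1)
    (hc : (1 : ℝ) + n 2 ≠ 0) : (Rrot n).mulVec e3v = n := by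
  have hc2 : (1 + n 2)⁻¹ * (1 + n 2) = 1 := inv_mul_cancel₀ hc
  rw [Rrot_eq]
  ext i
  fin_cases i <;>
      simp [Matrix.mulVec, dotProduct, Fin.sum_univ_three, e3v] <;>
    first
      | ring1
      | linear_combination (-(1 + n 2)⁻¹) * hn + (-(1 - n 2)) * hc2

lemma F1_eq : F1 = (Real.sqrt 2)⁻¹ • !![(1:ℝ),0,0;0,-1,0;0,0,0] := by
  ext i j
  fin_cases i <;> fin_cases j <;>
    simp [F1, vecMulVec, e1v, e2v, vecHead, vecTail]

lemma F2_eq : F2 = (Real.sqrt 2)⁻¹ • !![(0:ℝ),1,0;1,0,0;0,0,0] := by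
  ext i j
  fin_cases i <;> fin_cases j <;>
    simp [F2, vecMulVec, e1v, e2v, vecHead, vecTail]

lemma F3_eq : F3 = Real.sqrt (3/2) • !![-(3:ℝ)⁻¹,0,0;0,-(3:ℝ)⁻¹,0;0,0,2/3] := by
  ext i j
  fin_cases i <;> fin_cases j <;>
    simp [F3, vecMulVec, e3v, Matrix.one_apply, vecHead, vecTail] <;> norm_num

/-- Explicit form of `ρ₁F₁ + ρ₂F₂ + ρ₃F₃`. -/
lemma combo_eq (ρ : Fin 3 → ℝ) :
    ρ 0 • F1 + ρ 1 • F2 + ρ 2 • F3 =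
      !![(Real.sqrt 2)⁻¹ * ρ 0 - Real.sqrt (3/2) / 3 * ρ 2, (Real.sqrt 2)⁻¹ * ρ 1, 0;
         (Real.sqrt 2)⁻¹ * ρ 1, -(Real.sqrt 2)⁻¹ * ρ 0 - Real.sqrt (3/2) / 3 * ρ 2, 0;
         0, 0, 2 * Real.sqrt (3/2) / 3 * ρ 2] := by
  rw [F1_eq, F2_eq, F3_eq]
  ext i j
  fin_cases i <;> fin_cases j <;>
    simp [Matrix.smul_apply, vecHead, vecTail] <;> ring

lemma vecMulVec_mulVec' (n v : Fin 3 → ℝ) :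
    (vecMulVec n n).mulVec v = (n ⬝ᵥ v) • n := by
  ext i
  simp [vecMulVec, Matrix.mulVec, dotProduct, Fin.sum_univ_three]
  ring

/-- Any symmetric traceless 3×3 matrix `Q` having a unit eigenvector `n ≠ -e₃` decomposes
uniquely as `Q = s₊(n⊗n - (1/3)I) + R_n (ρ₁F₁ + ρ₂F₂ + ρ₃F₃) R_nᵀ`. -/
theorem Qtensor_decomposition
    (splus : ℝ) (hs : 0 < splus)
    (Q : Matrix (Fin 3) (Fin 3) ℝ) (hsymm : Q.IsSymm) (htr : Q.trace = 0)
    (n : Fin 3 → ℝ) (hn : n ⬝ᵥ n = 1) (hne : n ≠ -e3v)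
    (heig : ∃ lam : ℝ, Q.mulVec n = lam • n) :
    ∃! ρ : Fin 3 → ℝ,
      Q = splus • (vecMulVec n n - (3 : ℝ)⁻¹ • (1 : Matrix (Fin 3) (Fin 3) ℝ))
        + Rrot n * (ρ 0 • F1 + ρ 1 • F2 + ρ 2 • F3) * (Rrot n)ᵀ := by
  obtain ⟨lam, hlam⟩ := heig
  have hn' : n 0 ^ 2 + n 1 ^ 2 + n 2 ^ 2 = 1 := by
    have := hn; simpa [dotProduct, Fin.sum_univ_three, sq] using this
  have hc : (1 : ℝ) + n 2 ≠ 0 := by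
    intro h
    have h2 : n 2 = -1 := by linarith
    have h0 : n 0 = 0 := by nlinarith
    have h1 : n 1 = 0 := by nlinarith
    apply hne
    funext i
    fin_cases i <;> simp [e3v, h0, h1, h2]
  set R := Rrot n with hR
  have hRR : R * Rᵀ = 1 := Rrot_mul_transpose n hn' hc
  have hRtR : Rᵀ * R = 1 := Rrot_transpose_mul n hn' hc
  have hRe3 : R.mulVec e3v = n := Rrot_mulVec_e3 n hn' hc
  set S : Matrix (Fin 3) (Fin 3) ℝ :=
    vecMulVec n n - (3 : ℝ)⁻¹ • (1 : Matrix (Fin 3) (Fin 3) ℝ) with hS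
  set X : Matrix (Fin 3) (Fin 3) ℝ := Q - splus • S with hX
  set M : Matrix (Fin 3) (Fin 3) ℝ := Rᵀ * X * R with hM
  -- conjugating back
  have hback : R * M * Rᵀ = X := by
    calc R * (Rᵀ * X * R) * Rᵀ = (R * Rᵀ) * X * (R * Rᵀ) := by
          noncomm_ring
      _ = X := by rw [hRR]; simp
  -- symmetry of X and M
  have hXsymm : Xᵀ = X := by
    have hQ : Qᵀ = Q := hsymm
    have hvv : (vecMulVec n n)ᵀ = vecMulVec n n := by
      ext i j; simp [vecMulVec, Matrix.transpose_apply]; ring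
    simp [hX, hS, transpose_sub, transpose_smul, hQ, hvv]
  have hMsymm : Mᵀ = M := by
    calc Mᵀ = Rᵀ * Xᵀ * Rᵀᵀ := by simp [hM, Matrix.transpose_mul, Matrix.mul_assoc]
      _ = M := by rw [hXsymm, transpose_transpose]
  -- trace of M
  have htrS : S.trace = 0 := by
    have : (vecMulVec n n).trace = 1 := by
      simp [vecMulVec, Matrix.trace_fin_three]
      linarith [hn']
    simp [hS, trace_sub, trace_smul, this, Matrix.trace_one]
    try norm_num
  have htrM : M.trace = 0 := by
    have : M.trace = (R * Rᵀ * X).trace := by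
      rw [hM, Matrix.trace_mul_cycle]
    rw [this, hRR, Matrix.one_mul, hX]
    simp [trace_sub, trace_smul, htr, htrS]
  -- e₃ is an eigenvector of M
  have hMe3 : M.mulVec e3v = (lam - 2/3 * splus) • e3v := by
    have hXn : X.mulVec n = (lam - 2/3 * splus) • n := by
      have h1 : (vecMulVec n n).mulVec n = n := by
        rw [vecMulVec_mulVec', hn, one_smul]
      have : X.mulVec n = Q.mulVec n - splus • S.mulVec n := by
        simp [hX, Matrix.sub_mulVec, Matrix.smul_mulVec]
      rw [this, hlam, hS, Matrix.sub_mulVec, h1]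
      have h2 : ((3 : ℝ)⁻¹ • (1 : Matrix (Fin 3) (Fin 3) ℝ)).mulVec n = (3 : ℝ)⁻¹ • n := by
        simp [Matrix.smul_mulVec]
      rw [h2]
      ext i
      simp [Pi.smul_apply, Pi.sub_apply]
      ring
    have hRt_n : Rᵀ.mulVec n = e3v := by
      rw [← hRe3, Matrix.mulVec_mulVec, hRtR, Matrix.one_mulVec]
    calc M.mulVec e3v = Rᵀ.mulVec (X.mulVec (R.mulVec e3v)) := by
          rw [hM, Matrix.mulVec_mulVec, Matrix.mulVec_mulVec]
      _ = Rᵀ.mulVec ((lam - 2/3 * splus) • n) := by rw [hRe3, hXn]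
      _ = (lam - 2/3 * splus) • e3v := by
          rw [Matrix.mulVec_smul, hRt_n]
  -- vanishing entries of M
  have hM02 : M 0 2 = 0 := by
    have := congrFun hMe3 0
    simpa [Matrix.mulVec, dotProduct, Fin.sum_univ_three, e3v] using this
  have hM12 : M 1 2 = 0 := by
    have := congrFun hMe3 1
    simpa [Matrix.mulVec, dotProduct, Fin.sum_univ_three, e3v] using this
  have hM20 : M 2 0 = 0 := by
    have := congrFun (congrFun hMsymm 0) 2
    simp [Matrix.transpose_apply] at this
    rw [this, hM02]
  have hM21 : M 2 1 = 0 := by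
    have := congrFun (congrFun hMsymm 1) 2
    simp [Matrix.transpose_apply] at this
    rw [this, hM12]
  have hM10 : M 1 0 = M 0 1 := by
    have := congrFun (congrFun hMsymm 0) 1
    simpa [Matrix.transpose_apply] using this
  have htrM' : M 0 0 + M 1 1 + M 2 2 = 0 := by
    have := htrM; rwa [Matrix.trace_fin_three] at this
  -- useful radicals
  have h2 : (Real.sqrt 2)⁻¹ * Real.sqrt 2 = 1 :=
    inv_mul_cancel₀ (by positivity)
  have h32 : (Real.sqrt (3/2))⁻¹ * Real.sqrt (3/2) = 1 :=
    inv_mul_cancel₀ (by positivity)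
  -- the candidate coefficients
  set ρ : Fin 3 → ℝ :=
    ![Real.sqrt 2 * (M 0 0 + M 2 2 / 2), Real.sqrt 2 * M 0 1,
      (3/2) * (Real.sqrt (3/2))⁻¹ * M 2 2] with hρ
  have hcombo : ρ 0 • F1 + ρ 1 • F2 + ρ 2 • F3 = M := by
    rw [combo_eq]
    ext i j
    fin_cases i <;> fin_cases j <;> simp [hρ, -Real.sqrt_div, -Real.sqrt_div'] <;>
      first
        | linear_combination (M 0 0 + M 2 2 / 2) * h2 - (M 2 2 / 2) * h32
        | linear_combination -((M 0 0 + M 2 2 / 2) * h2) + (M 2 2 / 2) * h32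
        | linear_combination M 0 1 * h2
        | linear_combination -(M 0 1 * h2)
        | linear_combination -hM02
        | linear_combination hM02
        | linear_combination M 0 1 * h2 - hM10
        | linear_combination -(M 0 1 * h2) + hM10
        | linear_combination (-(M 0 0 + M 2 2 / 2)) * h2 - (M 2 2 / 2) * h32 - htrM'
        | linear_combination (M 0 0 + M 2 2 / 2) * h2 + (M 2 2 / 2) * h32 + htrM'
        | linear_combination -hM12
        | linear_combination hM12
        | linear_combination -hM20
        | linear_combination hM20
        | linear_combination -hM21
        | linear_combination hM21
        | linear_combination M 2 2 * h32
        | linear_combination -(M 2 2 * h32)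
        | linear_combination hM10
        | linear_combination -hM10
        | linear_combination (M 2 2 / 2) * h32
        | linear_combination -((M 2 2 / 2) * h32)
        | linear_combination -htrM' - (M 2 2 / 2) * h32
        | linear_combination htrM' + (M 2 2 / 2) * h32
  refine ⟨ρ, ?_, ?_⟩
  · show Q = splus • S + R * (ρ 0 • F1 + ρ 1 • F2 + ρ 2 • F3) * Rᵀ
    rw [hcombo, hback, hX]
    abel
  · intro ρ' hρ'0
    have hρ' : Q = splus • S + R * (ρ' 0 • F1 + ρ' 1 • F2 + ρ' 2 • F3) * Rᵀ := hρ'0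
    have hMC : M = ρ' 0 • F1 + ρ' 1 • F2 + ρ' 2 • F3 := by
      have hXeq : X = R * (ρ' 0 • F1 + ρ' 1 • F2 + ρ' 2 • F3) * Rᵀ := by
        rw [hX, hρ']; abel
      rw [hM, hXeq]
      calc Rᵀ * (R * (ρ' 0 • F1 + ρ' 1 • F2 + ρ' 2 • F3) * Rᵀ) * R
          = (Rᵀ * R) * (ρ' 0 • F1 + ρ' 1 • F2 + ρ' 2 • F3) * (Rᵀ * R) := by
            noncomm_ring
        _ = _ := by rw [hRtR]; simp
    have key : ρ' 0 • F1 + ρ' 1 • F2 + ρ' 2 • F3 = ρ 0 • F1 + ρ 1 • F2 + ρ 2 • F3 := by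
      rw [hcombo, ← hMC]
    rw [combo_eq, combo_eq] at key
    have hq : (0:ℝ) < (Real.sqrt 2)⁻¹ := by positivity
    have hp : (0:ℝ) < Real.sqrt (3/2) := by positivity
    have e22 : 2 * Real.sqrt (3/2) / 3 * ρ' 2 = 2 * Real.sqrt (3/2) / 3 * ρ 2 := by
      have := congrFun (congrFun key 2) 2
      simpa using this
    have h2' : ρ' 2 = ρ 2 := by
      have h3 : (2 * Real.sqrt (3/2) / 3) ≠ 0 := by positivity
      exact mul_left_cancel₀ h3 e22
    have e01 : (Real.sqrt 2)⁻¹ * ρ' 1 = (Real.sqrt 2)⁻¹ * ρ 1 := by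
      have := congrFun (congrFun key 0) 1
      simpa using this
    have h1' : ρ' 1 = ρ 1 := mul_left_cancel₀ (ne_of_gt hq) e01
    have e00 : (Real.sqrt 2)⁻¹ * ρ' 0 - Real.sqrt (3/2) / 3 * ρ' 2
        = (Real.sqrt 2)⁻¹ * ρ 0 - Real.sqrt (3/2) / 3 * ρ 2 := by
      have := congrFun (congrFun key 0) 0
      simpa using this
    have h0' : ρ' 0 = ρ 0 := by
      rw [h2'] at e00
      have : (Real.sqrt 2)⁻¹ * ρ' 0 = (Real.sqrt 2)⁻¹ * ρ 0 := by linarith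
      exact mul_left_cancel₀ (ne_of_gt hq) this
    funext i
    fin_cases i <;> simpa using by first | exact h0' | exact h1' | exact h2'
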